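/- arXiv:2312.02421 — 2 statements merged into one kernel-verified Lean document; each statement's English description precedes it below -/
import Mathlib

section
/- Let N ≥ 1 be an integer and λ₁, …, λ_N real numbers, and let M_N be the lower-triangular N×N matrix with (M_N)_{ii} = −2λ_i, (M_N)_{ij} = 0 for i < j, and (M_N)_{ij} = −1 for i > j. Then for each k = 1, …, N, the k-th entry of the vector adj(M_N) · e equals (−2)^{N−k} · (∏_{i=1}^{k−1} (−2λ_i + 1)) · (∏_{i=k+1}^{N} λ_i), where adj denotes the adjugate matrix and e ∈ ℝ^N is the all-ones column vector. -/
open Matrix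

/-- The limiting lower-triangular matrix `M_N`: diagonal entries `-2λ_i`, zeros above
the diagonal and `-1` below it (indices shifted by one, from `Fin N` to `{1, …, N}`). -/
noncomputable def GPMlim (N : ℕ) (lam : ℕ → ℝ) : Matrix (Fin N) (Fin N) ℝ :=
  Matrix.of fun i j =>
    if i = j then -2 * lam ((i : ℕ) + 1)
    else if i < j then 0
    else -1

open Finset

section Aux

variable {R : Type*} [CommRing R]

/-- Generic version of `GPMlim` over any commutative ring. -/
def GPM (N : ℕ) (lam : ℕ → R) : Matrix (Fin N) (Fin N) R :=
  Matrix.of fun i j =>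
    if i = j then -2 * lam ((i : ℕ) + 1)
    else if i < j then 0
    else -1

/-- Claimed value of the k-th entry of adj(M) e. -/
def Wfun (N : ℕ) (lam : ℕ → R) (k : ℕ) : R :=
  (-2 : R) ^ (N - (k + 1)) * (∏ i ∈ Icc 1 k, (-2 * lam i + 1)) * (∏ i ∈ Icc (k + 2) N, lam i)

lemma Wfun_eq (N : ℕ) (lam : ℕ → R) (k : ℕ) :
    Wfun N lam k = (∏ i ∈ Icc 1 k, (-2 * lam i + 1)) * (∏ i ∈ Icc (k + 2) N, (-2 * lam i)) := by
  have h : ∏ i ∈ Icc (k + 2) N, (-2 * lam i)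
      = (-2 : R) ^ (Icc (k + 2) N).card * ∏ i ∈ Icc (k + 2) N, lam i := by
    rw [prod_mul_distrib, prod_const]
  have hc : (Icc (k + 2) N).card = N - (k + 1) := by
    rw [Nat.card_Icc]; omega
  rw [h, hc, Wfun]; ring

lemma Qpeel (N k : ℕ) (h : k < N) (f : ℕ → R) :
    ∏ i ∈ Icc (k + 1) N, f i = f (k + 1) * ∏ i ∈ Icc (k + 2) N, f i := by
  rw [← Finset.Ico_add_one_right_eq_Icc, ← Finset.Ico_add_one_right_eq_Icc,
    Finset.prod_eq_prod_Ico_succ_bot (by omega)]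

lemma claimC (N : ℕ) (lam : ℕ → R) :
    ∀ k, k ≤ N →
      (∏ i ∈ Icc 1 k, (-2 * lam i + 1)) * (∏ i ∈ Icc (k + 1) N, (-2 * lam i))
        + ∑ j ∈ range k,
            (-1) * ((∏ i ∈ Icc 1 j, (-2 * lam i + 1)) * (∏ i ∈ Icc (j + 2) N, (-2 * lam i)))
      = ∏ i ∈ Icc 1 N, (-2 * lam i) := by
  intro k
  induction k with
  | zero => simp
  | succ k ih =>
    intro hk
    have hk' : k ≤ N := by omega
    have hkN : k < N := by omega
    have ihe := ih hk'
    rw [Qpeel N k hkN (fun i => (-2 * lam i))] at ihe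
    rw [Finset.sum_range_succ, Finset.prod_Icc_succ_top (Nat.succ_le_succ (Nat.zero_le k))]
    linear_combination ihe

lemma GPM_mulVec_W (N : ℕ) (lam : ℕ → R) :
    GPM N lam *ᵥ (fun k : Fin N => Wfun N lam (k : ℕ))
      = fun _ : Fin N => ∏ i ∈ Icc 1 N, (-2 * lam i) := by
  funext k
  have hstep : (GPM N lam *ᵥ fun j : Fin N => Wfun N lam (j : ℕ)) k
      = ∑ j ∈ range N,
          (if (k : ℕ) = j then -2 * lam ((k : ℕ) + 1) else if (k : ℕ) < j then 0 else -1)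
            * Wfun N lam j := by
    rw [mulVec, dotProduct,
      ← Fin.sum_univ_eq_sum_range (fun j =>
        (if (k : ℕ) = j then -2 * lam ((k : ℕ) + 1) else if (k : ℕ) < j then 0 else -1)
          * Wfun N lam j) N]
    refine Finset.sum_congr rfl fun j _ => ?_
    simp only [GPM, Matrix.of_apply, Fin.ext_iff, Fin.lt_def]
  rw [hstep]
  have hsub : ∑ j ∈ range N,
      (if (k : ℕ) = j then -2 * lam ((k : ℕ) + 1) else if (k : ℕ) < j then 0 else -1)
        * Wfun N lam j
      = ∑ j ∈ range ((k : ℕ) + 1),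
        (if (k : ℕ) = j then -2 * lam ((k : ℕ) + 1) else if (k : ℕ) < j then 0 else -1)
          * Wfun N lam j := by
    refine (Finset.sum_subset (by simp [Nat.succ_le_of_lt k.isLt, Finset.range_subset]; omega) ?_).symm
    intro j hj hj'
    simp only [mem_range] at hj hj'
    have h1 : (k : ℕ) < j := by omega
    have h2 : (k : ℕ) ≠ j := by omega
    simp [h1, h2]
  rw [hsub, Finset.sum_range_succ]
  have hdiag : (if (k : ℕ) = (k : ℕ) then -2 * lam ((k : ℕ) + 1)
      else if (k : ℕ) < (k : ℕ) then (0 : R) else -1) = -2 * lam ((k : ℕ) + 1) := by simp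
  rw [hdiag]
  have hoff : ∀ j ∈ range (k : ℕ),
      (if (k : ℕ) = j then -2 * lam ((k : ℕ) + 1) else if (k : ℕ) < j then (0 : R) else -1)
        * Wfun N lam j
      = (-1) * ((∏ i ∈ Icc 1 j, (-2 * lam i + 1)) * (∏ i ∈ Icc (j + 2) N, (-2 * lam i))) := by
    intro j hj
    simp only [mem_range] at hj
    have h1 : ¬ ((k : ℕ) = j) := by omega
    have h2 : ¬ ((k : ℕ) < j) := by omega
    rw [if_neg h1, if_neg h2, Wfun_eq]
  rw [Finset.sum_congr rfl hoff, Wfun_eq]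
  have hC := claimC N lam (k : ℕ) (le_of_lt k.isLt)
  have hpeel := Qpeel N (k : ℕ) k.isLt (fun i => (-2 * lam i))
  rw [hpeel] at hC
  linear_combination hC

lemma GPM_det (N : ℕ) (lam : ℕ → R) :
    (GPM N lam).det = ∏ i ∈ Icc 1 N, (-2 * lam i) := by
  have htri : (GPM N lam).BlockTriangular OrderDual.toDual := by
    intro i j h
    have hij : i < j := h
    simp [GPM, hij, hij.ne]
  rw [Matrix.det_of_lowerTriangular (GPM N lam) htri]
  have hdiag : ∀ i : Fin N, GPM N lam i i = -2 * lam ((i : ℕ) + 1) := fun i => by simp [GPM]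
  calc ∏ i : Fin N, GPM N lam i i = ∏ i : Fin N, -2 * lam ((i : ℕ) + 1) :=
        Finset.prod_congr rfl fun i _ => hdiag i
    _ = ∏ i ∈ range N, -2 * lam (i + 1) :=
        Fin.prod_univ_eq_prod_range (fun i => -2 * lam (i + 1)) N
    _ = ∏ i ∈ Icc 1 N, -2 * lam i := by
        rw [← Finset.Ico_add_one_right_eq_Icc, Finset.prod_Ico_eq_prod_range]
        simp [add_comm]

lemma GPM_adjugate_mulVec_one [IsDomain R] (N : ℕ) (lam : ℕ → R)
    (hdet : (GPM N lam).det ≠ 0) :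
    (GPM N lam).adjugate *ᵥ (fun _ : Fin N => (1 : R))
      = fun k : Fin N => Wfun N lam (k : ℕ) := by
  have h1 : GPM N lam *ᵥ (fun k : Fin N => Wfun N lam (k : ℕ))
      = (GPM N lam).det • (fun _ : Fin N => (1 : R)) := by
    rw [GPM_mulVec_W, GPM_det]
    funext k; simp
  funext k
  have e1 : (GPM N lam).adjugate *ᵥ (GPM N lam *ᵥ (fun k : Fin N => Wfun N lam (k : ℕ)))
      = (GPM N lam).det • (fun k : Fin N => Wfun N lam (k : ℕ)) := by
    rw [mulVec_mulVec, adjugate_mul, smul_mulVec, one_mulVec]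
  rw [h1, mulVec_smul] at e1
  have e2 := congrFun e1 k
  simp only [Pi.smul_apply, smul_eq_mul] at e2
  exact mul_left_cancel₀ hdet e2

end Aux

/-- The `k`-th entry of `adj(M_N) e` equals
`(-2)^{N-k} (∏_{i=1}^{k-1} (-2λ_i + 1)) (∏_{i=k+1}^{N} λ_i)`. -/
theorem adjugate_GPMlim_mulVec_one (N : ℕ) (hN : 1 ≤ N) (lam : ℕ → ℝ) :
    ∀ k : Fin N,
      ((GPMlim N lam).adjugate *ᵥ fun _ : Fin N => (1 : ℝ)) k =
        (-2 : ℝ) ^ (N - ((k : ℕ) + 1)) *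
          (∏ i ∈ Finset.Icc 1 (k : ℕ), (-2 * lam i + 1)) *
            (∏ i ∈ Finset.Icc ((k : ℕ) + 2) N, lam i) := by
  intro k
  classical
  set lamP : ℕ → Polynomial ℝ := fun i => Polynomial.C (lam i) + Polynomial.X with hlamP
  have hdet : (GPM N lamP).det ≠ 0 := by
    rw [GPM_det]
    refine Finset.prod_ne_zero_iff.mpr fun i _ => mul_ne_zero (by norm_num) ?_
    simpa [hlamP, add_comm] using (Polynomial.monic_X_add_C (lam i)).ne_zero
  have hadj := GPM_adjugate_mulVec_one N lamP hdet
  set φ : Polynomial ℝ →+* ℝ := Polynomial.evalRingHom 0 with hφ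
  have hmap : (GPM N lamP).map φ = GPMlim N lam := by
    ext i j
    simp only [GPM, GPMlim, Matrix.map_apply, Matrix.of_apply]
    split_ifs <;> simp [hφ, hlamP]
  have hadjmap : (GPMlim N lam).adjugate = ((GPM N lamP).adjugate).map φ := by
    rw [← hmap]
    have h := RingHom.map_adjugate φ (GPM N lamP)
    simpa [RingHom.mapMatrix_apply] using h.symm
  have hent : ((GPMlim N lam).adjugate *ᵥ fun _ : Fin N => (1 : ℝ)) k
      = φ (((GPM N lamP).adjugate *ᵥ fun _ : Fin N => (1 : Polynomial ℝ)) k) := by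
    simp [mulVec, dotProduct, hadjmap, Matrix.map_apply, map_sum]
  rw [hent, hadj]
  simp [Wfun, hφ, hlamP, Polynomial.eval_prod]
end

section
/- Let r₀ > 0, let n ≥ 1 be an integer, and let z ∈ ℂ with |z| > r₀. Then (r₀/(2π)) · ∫_0^{2π} log|z − r₀ e^{it}| · e^{int} dt = −(r₀^{n+1}/(2n)) · z^n / |z|^{2n}. -/
open Real Complex

open intervalIntegral MeasureTheory

lemma int_exp_eq (m : ℤ) :
    (∫ t in (0:ℝ)..(2*Real.pi), Complex.exp ((m:ℂ) * t * Complex.I)) =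
      if m = 0 then (2*Real.pi : ℂ) else 0 := by
  rcases eq_or_ne m 0 with rfl | hm
  · simp
  · rw [if_neg hm]
    have hc : (m:ℂ) * Complex.I ≠ 0 :=
      mul_ne_zero (by exact_mod_cast hm) Complex.I_ne_zero
    have h := integral_exp_mul_complex (a := (0:ℝ)) (b := 2*Real.pi) hc
    simp only [show ∀ t:ℝ, (m:ℂ) * t * Complex.I = ((m:ℂ)*Complex.I) * t from fun t => by ring]
    rw [h]
    have : Complex.exp ((m:ℂ)*Complex.I * (2*Real.pi)) = 1 := by
      rw [show (m:ℂ)*Complex.I * (2*Real.pi) = (m:ℤ) * (2*Real.pi*Complex.I) by push_cast; ring]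
      exact Complex.exp_int_mul_two_pi_mul_I m
    simp [this]

lemma hasSum_int (c : ℂ) (hc : ‖c‖ < 1) (g : ℕ → ℤ) (f : ℝ → ℂ)
    (hf : ∀ t : ℝ, HasSum (fun k : ℕ => -(c ^ k / k) * Complex.exp ((g k : ℂ) * t * Complex.I)) (f t)) :
    HasSum (fun k : ℕ => -(c ^ k / k) *
        ∫ t in (0:ℝ)..(2*Real.pi), Complex.exp ((g k : ℂ) * t * Complex.I))
      (∫ t in (0:ℝ)..(2*Real.pi), f t) := by
  have habs : ∀ (k : ℕ) (t : ℝ),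
      ‖-(c ^ k / k) * Complex.exp ((g k : ℂ) * t * Complex.I)‖ ≤ ‖c‖ ^ k := by
    intro k t
    rw [norm_mul, Complex.norm_exp]
    have : (((g k : ℂ)) * t * Complex.I).re = 0 := by simp
    rw [this, Real.exp_zero, mul_one, norm_neg, norm_div, norm_pow]
    rcases Nat.eq_zero_or_pos k with rfl | hk
    · simp
    · apply div_le_self (pow_nonneg (norm_nonneg c) k)
      · rw [Complex.norm_natCast]; exact_mod_cast hk
  have h := intervalIntegral.hasSum_integral_of_dominated_convergence
    (μ := MeasureTheory.volume) (a := (0:ℝ)) (b := 2*Real.pi)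
    (F := fun k t => -(c ^ k / k) * Complex.exp ((g k : ℂ) * t * Complex.I)) (f := f)
    (bound := fun k _ => ‖c‖ ^ k)
    (fun k => (Continuous.aestronglyMeasurable (by continuity)))
    (fun k => MeasureTheory.ae_of_all _ fun t _ => habs k t)
    (MeasureTheory.ae_of_all _ fun t _ => summable_geometric_of_lt_one (norm_nonneg c) hc)
    (intervalIntegrable_const)
    (MeasureTheory.ae_of_all _ fun t _ => hf t)
  simpa only [intervalIntegral.integral_const_mul] using h

lemma norm_c_exp (c : ℂ) (hc : ‖c‖ < 1) (t : ℝ) :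
    ‖c * Complex.exp ((t:ℂ) * Complex.I)‖ < 1 := by
  rw [norm_mul, Complex.norm_exp_ofReal_mul_I, mul_one]
  exact hc

lemma intA (c : ℂ) (hc : ‖c‖ < 1) (n : ℕ) (hn : 1 ≤ n) :
    (∫ t in (0:ℝ)..(2*Real.pi),
      Complex.log (1 - c * Complex.exp ((t:ℂ) * Complex.I)) *
        Complex.exp ((n:ℂ) * t * Complex.I)) = 0 := by
  have hf : ∀ t : ℝ, HasSum
      (fun k : ℕ => -(c ^ k / k) * Complex.exp (((((n:ℤ)+k : ℤ)):ℂ) * t * Complex.I))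
      (Complex.log (1 - c * Complex.exp ((t:ℂ) * Complex.I)) *
        Complex.exp ((n:ℂ) * t * Complex.I)) := by
    intro t
    have h0 := Complex.hasSum_taylorSeries_neg_log (norm_c_exp c hc t)
    have h1 := (h0.mul_right (Complex.exp ((n:ℂ) * t * Complex.I))).neg
    rw [neg_mul, neg_neg] at h1
    convert h1 using 2 with k
    · rfl
    rw [mul_pow, ← Complex.exp_nat_mul,
      show ((((n:ℤ)+k : ℤ)):ℂ) * t * Complex.I
          = (k:ℂ) * ((t:ℂ) * Complex.I) + (n:ℂ) * t * Complex.I by push_cast; ring,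
      Complex.exp_add]
    ring
  have h := hasSum_int c hc (fun k => (n:ℤ)+k) _ hf
  have hz : ∀ k : ℕ, -(c ^ k / k) *
      ∫ t in (0:ℝ)..(2*Real.pi), Complex.exp (((((n:ℤ)+k : ℤ)):ℂ) * t * Complex.I) = 0 := by
    intro k
    rw [int_exp_eq, if_neg (by omega), mul_zero]
  rw [funext hz] at h
  exact h.unique hasSum_zero

set_option maxHeartbeats 1000000 in
lemma intB (c : ℂ) (hc : ‖c‖ < 1) (n : ℕ) (hn : 1 ≤ n) :
    (∫ t in (0:ℝ)..(2*Real.pi),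
      (starRingEnd ℂ) (Complex.log (1 - c * Complex.exp ((t:ℂ) * Complex.I))) *
        Complex.exp ((n:ℂ) * t * Complex.I)) =
      -(2*Real.pi) * ((starRingEnd ℂ) c) ^ n / n := by
  have hconjexp : ∀ t : ℝ, (starRingEnd ℂ) (Complex.exp ((t:ℂ) * Complex.I))
      = Complex.exp (-((t:ℂ) * Complex.I)) := by
    intro t
    rw [← Complex.exp_conj, map_mul, Complex.conj_ofReal, Complex.conj_I, mul_neg]
  have hf : ∀ t : ℝ, HasSum
      (fun k : ℕ => -(((starRingEnd ℂ) c) ^ k / k) *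
        Complex.exp (((((n:ℤ)-k : ℤ)):ℂ) * t * Complex.I))
      ((starRingEnd ℂ) (Complex.log (1 - c * Complex.exp ((t:ℂ) * Complex.I))) *
        Complex.exp ((n:ℂ) * t * Complex.I)) := by
    intro t
    have h0 := Complex.hasSum_taylorSeries_neg_log (norm_c_exp c hc t)
    have h0c := h0.map (starRingEnd ℂ).toAddMonoidHom Complex.continuous_conj
    simp only [RingHom.toAddMonoidHom_eq_coe, AddMonoidHom.coe_coe, Function.comp_def, map_neg,
      map_div₀, map_pow, map_mul, map_natCast, hconjexp] at h0c
    have h1 := (h0c.mul_right (Complex.exp ((n:ℂ) * t * Complex.I))).neg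
    rw [neg_mul, neg_neg] at h1
    convert h1 using 2 with k
    · rfl
    rw [mul_pow, ← Complex.exp_nat_mul,
      show ((((n:ℤ)-k : ℤ)):ℂ) * t * Complex.I
          = (k:ℂ) * (-((t:ℂ) * Complex.I)) + (n:ℂ) * t * Complex.I by push_cast; ring,
      Complex.exp_add]
    ring
  have h := hasSum_int ((starRingEnd ℂ) c) (by rwa [Complex.norm_conj]) (fun k => (n:ℤ)-k) _ hf
  have hz : (fun k : ℕ => -(((starRingEnd ℂ) c) ^ k / k) *
      ∫ t in (0:ℝ)..(2*Real.pi), Complex.exp (((((n:ℤ)-k : ℤ)):ℂ) * t * Complex.I))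
      = fun k : ℕ => if k = n then -(2*Real.pi) * ((starRingEnd ℂ) c) ^ n / n else 0 := by
    funext k
    rcases eq_or_ne k n with rfl | hk
    · rw [int_exp_eq, if_pos (by omega), if_pos rfl]
      ring
    · rw [int_exp_eq, if_neg (by omega), if_neg hk, mul_zero]
  rw [hz] at h
  exact h.unique (hasSum_ite_eq n _)

/-- The single layer potential of the density `e^{inθ}` on the circle of radius `r₀`,
evaluated at an exterior point `z`:
`(r₀/(2π)) ∫₀^{2π} log|z − r₀ e^{it}| e^{int} dt = −(r₀^{n+1}/(2n)) zⁿ/|z|^{2n}`. -/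
theorem singleLayer_circle_exterior (r₀ : ℝ) (hr₀ : 0 < r₀) (n : ℕ) (hn : 1 ≤ n)
    (z : ℂ) (hz : r₀ < ‖z‖) :
    ((r₀ : ℂ) / (2 * Real.pi)) *
        ∫ t in (0 : ℝ)..(2 * Real.pi),
          (Real.log ‖z - (r₀ : ℂ) * Complex.exp ((t : ℂ) * Complex.I)‖ : ℂ) *
            Complex.exp ((n : ℂ) * (t : ℂ) * Complex.I) =
      -((r₀ : ℂ) ^ (n + 1) / (2 * (n : ℂ))) * z ^ n / ((‖z‖ : ℂ)) ^ (2 * n) := by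
  have hzabs : 0 < ‖z‖ := lt_trans hr₀ hz
  have hz0 : z ≠ 0 := by
    intro h; rw [h] at hzabs; simp at hzabs
  set c : ℂ := (r₀:ℂ) / z with hcdef
  have hc : ‖c‖ < 1 := by
    rw [hcdef, norm_div, div_lt_one hzabs]; simpa [abs_of_pos hr₀] using hz
  have hw : ∀ t : ℝ, (1 : ℂ) - c * Complex.exp ((t:ℂ)*Complex.I) ≠ 0 := by
    intro t h
    have h1 : c * Complex.exp ((t:ℂ)*Complex.I) = 1 := by linear_combination -h
    have h2 := norm_c_exp c hc t
    rw [h1] at h2; simp at h2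
  -- continuity facts
  have hwcont : Continuous fun t : ℝ => (1:ℂ) - c * Complex.exp ((t:ℂ)*Complex.I) := by
    continuity
  have hslit : ∀ t : ℝ, ((1:ℂ) - c * Complex.exp ((t:ℂ)*Complex.I)) ∈ Complex.slitPlane := by
    intro t
    refine Complex.mem_slitPlane_iff.mpr (Or.inl ?_)
    have h2 := norm_c_exp c hc t
    have h3 : (c * Complex.exp ((t:ℂ)*Complex.I)).re ≤ ‖c * Complex.exp ((t:ℂ)*Complex.I)‖ :=
      Complex.re_le_norm _
    simp only [Complex.sub_re, Complex.one_re]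
    linarith
  have hlogcont : Continuous fun t : ℝ => Complex.log (1 - c * Complex.exp ((t:ℂ)*Complex.I)) := by
    refine continuous_iff_continuousAt.mpr fun t => ?_
    exact ContinuousAt.comp (g := Complex.log)
      (f := fun t : ℝ => (1:ℂ) - c * Complex.exp ((t:ℂ)*Complex.I))
      (continuousAt_clog (hslit t)) hwcont.continuousAt
  have hecont : Continuous fun t : ℝ => Complex.exp ((n:ℂ) * t * Complex.I) := by continuity
  -- pointwise rewrite of the integrand
  have key : (fun t : ℝ =>
      (Real.log ‖z - (r₀ : ℂ) * Complex.exp ((t : ℂ) * Complex.I)‖ : ℂ) *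
        Complex.exp ((n : ℂ) * (t : ℂ) * Complex.I))
      = fun t : ℝ =>
        (Real.log ‖z‖ : ℂ) * Complex.exp ((n:ℂ) * t * Complex.I) +
        (Complex.log (1 - c * Complex.exp ((t:ℂ)*Complex.I)) *
            Complex.exp ((n:ℂ) * t * Complex.I) +
          (starRingEnd ℂ) (Complex.log (1 - c * Complex.exp ((t:ℂ)*Complex.I))) *
            Complex.exp ((n:ℂ) * t * Complex.I)) / 2 := by
    funext t
    have hfac : z - (r₀:ℂ) * Complex.exp ((t:ℂ)*Complex.I)
        = z * (1 - c * Complex.exp ((t:ℂ)*Complex.I)) := by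
      rw [hcdef]; field_simp
    have hlogsplit : (Real.log ‖z - (r₀ : ℂ) * Complex.exp ((t : ℂ) * Complex.I)‖ : ℂ)
        = (Real.log ‖z‖ : ℂ) +
          (Complex.log (1 - c * Complex.exp ((t:ℂ)*Complex.I)) +
            (starRingEnd ℂ) (Complex.log (1 - c * Complex.exp ((t:ℂ)*Complex.I)))) / 2 := by
      rw [hfac, norm_mul,
        Real.log_mul (norm_ne_zero_iff.mpr hz0) (norm_ne_zero_iff.mpr (hw t))]
      rw [Complex.add_conj, Complex.log_re]
      push_cast
      ring
    rw [hlogsplit]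
    ring
  rw [key, intervalIntegral.integral_add, intervalIntegral.integral_div,
    intervalIntegral.integral_add, intervalIntegral.integral_const_mul]
  · have e0 : (∫ t in (0:ℝ)..(2*Real.pi), Complex.exp ((n:ℂ) * t * Complex.I)) = 0 := by
      have := int_exp_eq (n : ℤ)
      rw [if_neg (by omega)] at this
      simpa using this
    rw [e0, intA c hc n hn, intB c hc n hn, mul_zero]
    have hconjc : (starRingEnd ℂ) c = (r₀:ℂ) / (starRingEnd ℂ) z := by
      rw [hcdef, map_div₀, Complex.conj_ofReal]
    have habs2 : ((‖z‖ : ℂ)) ^ (2*n) = (z * (starRingEnd ℂ) z) ^ n := by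
      rw [pow_mul, Complex.mul_conj]
      norm_cast
      rw [Complex.sq_norm]
    rw [hconjc, habs2]
    have hcz : (starRingEnd ℂ) z ≠ 0 := by simpa using hz0
    have hnne : (n:ℂ) ≠ 0 := Nat.cast_ne_zero.mpr (by omega)
    have hpi : (Real.pi:ℂ) ≠ 0 := by exact_mod_cast Real.pi_ne_zero
    have hczn : (starRingEnd ℂ) z ^ n ≠ 0 := pow_ne_zero _ hcz
    have hzn : z ^ n ≠ 0 := pow_ne_zero _ hz0
    rw [div_pow, mul_pow]
    field_simp
    ring
  · exact ((hlogcont.mul hecont).intervalIntegrable _ _)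
  · exact (((Complex.continuous_conj.comp hlogcont).mul hecont).intervalIntegrable _ _)
  · exact ((continuous_const.mul hecont).intervalIntegrable _ _)
  · exact ((((hlogcont.mul hecont).add
      ((Complex.continuous_conj.comp hlogcont).mul hecont)).div_const 2).intervalIntegrable _ _)
end
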